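/- arXiv:1302.5376 — 4 statements merged into one kernel-verified Lean document; each statement's English description precedes it below -/
import Mathlib

section
/- Bounded size of the distance-based CSIT allocation (Corollary 1): Let S ⊂ ℝ² be a finite set of points such that ‖s − s'‖ ≥ δ for all distinct s, s' ∈ S, for some δ > 0. Let γ < 1 and set d₀ := 1/(1−γ). Then for every j ∈ S, Σ_{k∈S} Σ_{i∈S} [1 + (γ−1)(‖j − k‖ + ‖k − i‖)]⁺ ≤ (2d₀/δ + 1)⁴, a bound independent of the cardinality of S. (The left-hand side equals lim_{P→∞} Σ_{k,i} B^{Dist,(j)}_{ki}/log₂(P), i.e., the size of the distance-based CSIT allocation B^{Dist,(j)}_{ki} = ⌈[1 + (γ−1)(‖j−k‖ + ‖k−i‖)]⁺ log₂(P)⌉ at TX j; in particular each summand with ‖j − k‖ ≥ d₀ vanishes, so TX j needs no CSIT relative to RXs farther than d₀.) -/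
/-!
STATEMENT 3: Bounded size of the distance-based CSIT allocation (Corollary 1 of
"Spatial CSIT Allocation Policies for Network MIMO Channels").
-/

open MeasureTheory Metric

/-- Packing lemma: a δ-separated finite set within distance `R` of a center `c`
in the plane has at most `(2R/δ+1)^2` points. -/
lemma packing_card_le (c : EuclideanSpace ℝ (Fin 2)) (T : Finset (EuclideanSpace ℝ (Fin 2)))
    (δ R : ℝ) (hδ : 0 < δ) (hR : 0 ≤ R)
    (hT : ∀ x ∈ T, dist c x ≤ R)
    (hsep : ∀ s ∈ T, ∀ s' ∈ T, s ≠ s' → δ ≤ dist s s') :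
    (T.card : ℝ) ≤ (2 * R / δ + 1) ^ 2 := by
  have hδ2 : 0 < δ / 2 := by linarith
  have hdisj : Set.PairwiseDisjoint (T : Set (EuclideanSpace ℝ (Fin 2)))
      (fun x => ball x (δ / 2)) := by
    intro x hx y hy hxy
    apply ball_disjoint_ball
    calc δ / 2 + δ / 2 = δ := by ring
    _ ≤ dist x y := hsep x hx y hy hxy
  have hsub : ∀ x ∈ T, ball x (δ / 2) ⊆ ball c (R + δ / 2) := by
    intro x hx
    apply ball_subset_ball'
    have := hT x hx
    rw [dist_comm]
    linarith
  have hmeas : volume (⋃ x ∈ T, ball x (δ / 2)) = ∑ x ∈ T, volume (ball x (δ / 2)) :=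
    measure_biUnion_finset hdisj (fun x _ => measurableSet_ball)
  have hle : ∑ x ∈ T, volume (ball x (δ / 2)) ≤ volume (ball c (R + δ / 2)) := by
    rw [← hmeas]
    exact measure_mono (Set.iUnion₂_subset hsub)
  simp only [EuclideanSpace.volume_ball, Fintype.card_fin, Finset.sum_const, nsmul_eq_mul] at hle
  have hC : (ENNReal.ofReal (Real.sqrt Real.pi ^ 2 / Real.Gamma ((2:ℕ) / 2 + 1))) ≠ 0 ∧
      (ENNReal.ofReal (Real.sqrt Real.pi ^ 2 / Real.Gamma ((2:ℕ) / 2 + 1))) ≠ ⊤ := by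
    constructor
    · rw [ne_eq, ENNReal.ofReal_eq_zero, not_le]
      have : ((2:ℕ) : ℝ) / 2 + 1 = 2 := by norm_num
      rw [this, Real.Gamma_two, Real.sq_sqrt Real.pi_pos.le]
      positivity
    · exact ENNReal.ofReal_ne_top
  rw [← mul_assoc] at hle
  have hle2 : (T.card : ENNReal) * ENNReal.ofReal (δ / 2) ^ 2 ≤ ENNReal.ofReal (R + δ / 2) ^ 2 :=
    (ENNReal.mul_le_mul_iff_left hC.1 hC.2).mp hle
  have h3 : ((T.card : ℝ) * (δ / 2) ^ 2) ≤ (R + δ / 2) ^ 2 := by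
    have := hle2
    rw [← ENNReal.ofReal_pow hδ2.le, ← ENNReal.ofReal_natCast T.card,
      ← ENNReal.ofReal_mul (by positivity), ← ENNReal.ofReal_pow (by linarith)] at this
    exact (ENNReal.ofReal_le_ofReal_iff (by positivity)).mp this
  have key : (2 * R / δ + 1) = (R + δ / 2) / (δ / 2) := by field_simp
  rw [key, div_pow, le_div_iff₀ (by positivity)]
  linarith


/-- **Corollary 1.** For a planar set `S` of TX/RX positions with minimum
separation `δ > 0` and pathloss parameter `γ < 1`, the size of the distance-based
CSIT allocation at any TX `j ∈ S`, namely
`Σ_{k∈S} Σ_{i∈S} [1 + (γ-1)(‖j-k‖ + ‖k-i‖)]⁺`, is at most `(2·d₀/δ + 1)⁴` with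
`d₀ = 1/(1-γ)` — a bound independent of the cardinality of `S`. -/
theorem bounded_size_of_distance_based_CSIT
    (S : Finset (EuclideanSpace ℝ (Fin 2))) (δ : ℝ) (hδ : 0 < δ)
    (hsep : ∀ s ∈ S, ∀ s' ∈ S, s ≠ s' → δ ≤ dist s s')
    (γ : ℝ) (hγ : γ < 1) (j : EuclideanSpace ℝ (Fin 2)) (hj : j ∈ S) :
    ∑ k ∈ S, ∑ i ∈ S, max (1 + (γ - 1) * (dist j k + dist k i)) 0 ≤
      (2 * (1 / (1 - γ)) / δ + 1) ^ 4 := by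
  have h1γ : 0 < 1 - γ := by linarith
  set d : ℝ := 1 / (1 - γ) with hd
  have hd0 : 0 < d := by positivity
  have hd1 : (1 - γ) * d = 1 := by
    rw [hd]; field_simp
  set M : ℝ := (2 * d / δ + 1) ^ 2 with hM
  have hM0 : 0 ≤ M := by positivity
  have hcard : ∀ c : EuclideanSpace ℝ (Fin 2),
      ((S.filter (fun x => dist c x ≤ d)).card : ℝ) ≤ M := by
    intro c
    apply packing_card_le c _ δ d hδ hd0.le
    · intro x hx; exact (Finset.mem_filter.mp hx).2
    · intro s hs s' hs' hne
      exact hsep s (Finset.mem_filter.mp hs).1 s' (Finset.mem_filter.mp hs').1 hne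
  have inner : ∀ k ∈ S, ∑ i ∈ S, max (1 + (γ - 1) * (dist j k + dist k i)) 0 ≤
      if dist j k ≤ d then M else 0 := by
    intro k hk
    by_cases h : dist j k ≤ d
    · rw [if_pos h]
      calc ∑ i ∈ S, max (1 + (γ - 1) * (dist j k + dist k i)) 0
          ≤ ∑ i ∈ S, (if dist k i ≤ d then (1:ℝ) else 0) := by
            apply Finset.sum_le_sum
            intro i hi
            by_cases h2 : dist k i ≤ d
            · rw [if_pos h2]
              have h4 : (0:ℝ) ≤ dist j k := dist_nonneg
              have h5 : (0:ℝ) ≤ dist k i := dist_nonneg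
              have h6 : (γ - 1) * (dist j k + dist k i) ≤ 0 := by nlinarith
              have : (1:ℝ) ≥ 0 := by norm_num
              exact max_le (by linarith) (by norm_num)
            · rw [if_neg h2]
              push_neg at h2
              have h4 : (0:ℝ) ≤ dist j k := dist_nonneg
              have h7 : (1 - γ) * d < (1 - γ) * dist k i :=
                mul_lt_mul_of_pos_left h2 h1γ
              exact max_le (by nlinarith) le_rfl
        _ = ((S.filter (fun i => dist k i ≤ d)).card : ℝ) := by
              rw [Finset.sum_boole]
        _ ≤ M := hcard k
    · rw [if_neg h]
      push_neg at h
      apply Finset.sum_nonpos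
      intro i hi
      have h5 : (0:ℝ) ≤ dist k i := dist_nonneg
      have h7 : (1 - γ) * d < (1 - γ) * dist j k := mul_lt_mul_of_pos_left h h1γ
      exact max_le (by nlinarith) le_rfl
  calc ∑ k ∈ S, ∑ i ∈ S, max (1 + (γ - 1) * (dist j k + dist k i)) 0
      ≤ ∑ k ∈ S, (if dist j k ≤ d then M else 0) := Finset.sum_le_sum inner
    _ = ((S.filter (fun k => dist j k ≤ d)).card : ℝ) * M := by
        rw [← Finset.sum_filter, Finset.sum_const, nsmul_eq_mul]
    _ ≤ M * M := mul_le_mul_of_nonneg_right (hcard j) hM0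
    _ = (2 * d / δ + 1) ^ 4 := by rw [hM]; ring
end

section
/- Zero-forcing leakage bound (key deterministic step in the proof of Proposition 1): Let K ≥ 1, let h, t_1, …, t_K, t_1*, …, t_K* ∈ ℂ^K, and let i ∈ {1,…,K}. Assume h^H t_j* = 0 for every j ≠ i. Then log₂(1 + Σ_{j≠i} |h^H t_j|²) ≤ log₂(1 + Σ_{j=1}^K ‖t_j − t_j*‖²) + log₂(1 + ‖h‖²). -/
/-!
STATEMENT 5: Zero-forcing leakage bound (key deterministic step in the proof of
Proposition 1 of "Spatial CSIT Allocation Policies for Network MIMO Channels").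
-/

open scoped InnerProductSpace

/-- If the beamformers `t_j*` are zero-forcing for the channel row `h` of user `i`
(`h^H t_j* = 0` for `j ≠ i`), then the interference leakage of the beamformers `t_j`
satisfies `log₂(1 + Σ_{j≠i} |h^H t_j|²) ≤ log₂(1 + Σ_j ‖t_j - t_j*‖²) + log₂(1 + ‖h‖²)`. -/
theorem zero_forcing_leakage_bound
    (K : ℕ) (hK : 1 ≤ K) (h : EuclideanSpace ℂ (Fin K))
    (t tstar : Fin K → EuclideanSpace ℂ (Fin K)) (i : Fin K)
    (hzf : ∀ j : Fin K, j ≠ i → ⟪h, tstar j⟫_ℂ = 0) :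
    Real.logb 2 (1 + ∑ j ∈ Finset.univ.erase i, ‖⟪h, t j⟫_ℂ‖ ^ 2) ≤
      Real.logb 2 (1 + ∑ j : Fin K, ‖t j - tstar j‖ ^ 2) +
        Real.logb 2 (1 + ‖h‖ ^ 2) := by
  set A := ∑ j : Fin K, ‖t j - tstar j‖ ^ 2 with hA
  set B := ‖h‖ ^ 2 with hB
  have hA0 : 0 ≤ A := Finset.sum_nonneg fun j _ => sq_nonneg _
  have hB0 : 0 ≤ B := sq_nonneg _
  have hS : ∑ j ∈ Finset.univ.erase i, ‖⟪h, t j⟫_ℂ‖ ^ 2 ≤ B * A := by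
    have h1 : ∑ j ∈ Finset.univ.erase i, ‖⟪h, t j⟫_ℂ‖ ^ 2 ≤
        ∑ j ∈ Finset.univ.erase i, B * ‖t j - tstar j‖ ^ 2 := by
      refine Finset.sum_le_sum fun j hj => ?_
      have hji : j ≠ i := Finset.ne_of_mem_erase hj
      have : ⟪h, t j⟫_ℂ = ⟪h, t j - tstar j⟫_ℂ := by
        rw [inner_sub_right, hzf j hji, sub_zero]
      rw [this, hB]
      calc ‖⟪h, t j - tstar j⟫_ℂ‖ ^ 2 ≤ (‖h‖ * ‖t j - tstar j‖) ^ 2 := by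
            gcongr; exact norm_inner_le_norm _ _
        _ = ‖h‖ ^ 2 * ‖t j - tstar j‖ ^ 2 := by ring
    refine h1.trans ?_
    rw [← Finset.mul_sum]
    gcongr
    exact Finset.sum_le_sum_of_subset_of_nonneg (Finset.erase_subset _ _)
      fun j _ _ => sq_nonneg _
  have key : 1 + ∑ j ∈ Finset.univ.erase i, ‖⟪h, t j⟫_ℂ‖ ^ 2 ≤ (1 + A) * (1 + B) := by
    nlinarith
  have hpos : (0:ℝ) < 1 + ∑ j ∈ Finset.univ.erase i, ‖⟪h, t j⟫_ℂ‖ ^ 2 := by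
    have : 0 ≤ ∑ j ∈ Finset.univ.erase i, ‖⟪h, t j⟫_ℂ‖ ^ 2 :=
      Finset.sum_nonneg fun j _ => sq_nonneg _
    linarith
  calc Real.logb 2 (1 + ∑ j ∈ Finset.univ.erase i, ‖⟪h, t j⟫_ℂ‖ ^ 2)
      ≤ Real.logb 2 ((1 + A) * (1 + B)) :=
        Real.logb_le_logb_of_le (by norm_num) hpos key
    _ = Real.logb 2 (1 + A) + Real.logb 2 (1 + B) :=
        Real.logb_mul (by linarith : (0:ℝ) < 1 + A).ne' (by linarith : (0:ℝ) < 1 + B).ne'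
end

section
/- Path bound on the Neumann-series terms of the channel inverse: Let K ≥ 2, let X be a metric space with distance d, and let p : {1,…,K} → X be injective; set δ := min_{k≠i} d(p_k, p_i) > 0. Let μ ∈ (0,1), M > 0, m > 0, and let H ∈ ℂ^{K×K} satisfy |H_{ki}| ≤ M μ^{d(p_k,p_i)} for all k ≠ i and |H_{ii}| ≥ m for all i. Let D be the diagonal matrix with the same diagonal as H. Then for every n ≥ 1 and all j, i ∈ {1,…,K}: |( (D^{−1}(D − H))^n D^{−1} )_{ji}| ≤ K^{n−1} (M/m)^n (1/m) · μ^{max(d(p_j,p_i), nδ)}. -/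
/-!
STATEMENT 10: Path bound on the Neumann-series terms of the channel inverse.
-/

/-- Path bound on the terms of the Neumann expansion of the inverse of a channel
matrix with geometrically decaying off-diagonal entries: for all `n ≥ 1` and `j, i`,
`|((D⁻¹(D-H))ⁿ D⁻¹)_{ji}| ≤ K^{n-1} (M/m)ⁿ (1/m) μ^{max(d(p_j,p_i), nδ)}`. -/
theorem path_bound_neumann_terms
    (K : ℕ) (hK : 2 ≤ K) {X : Type*} [MetricSpace X]
    (p : Fin K → X) (hp : Function.Injective p)
    (δ : ℝ) (hδpos : 0 < δ)
    (hδmin : ∀ k i : Fin K, k ≠ i → δ ≤ dist (p k) (p i))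
    (μ : ℝ) (hμ0 : 0 < μ) (hμ1 : μ < 1) (M m : ℝ) (hM : 0 < M) (hm : 0 < m)
    (H : Matrix (Fin K) (Fin K) ℂ)
    (hoff : ∀ k i : Fin K, k ≠ i → ‖H k i‖ ≤ M * μ ^ dist (p k) (p i))
    (hdiag : ∀ i : Fin K, m ≤ ‖H i i‖)
    (D : Matrix (Fin K) (Fin K) ℂ) (hD : D = Matrix.diagonal fun i => H i i)
    (n : ℕ) (hn : 1 ≤ n) (j i : Fin K) :
    ‖((D⁻¹ * (D - H)) ^ n * D⁻¹) j i‖ ≤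
      (K : ℝ) ^ (n - 1) * (M / m) ^ n * (1 / m) *
        μ ^ max (dist (p j) (p i)) (n * δ) := by
  have hHdiag : ∀ k : Fin K, H k k ≠ 0 := by
    intro k h
    have := hdiag k
    rw [h] at this
    simp at this
    linarith
  have hDinv : D⁻¹ = Matrix.diagonal fun i => (H i i)⁻¹ := by
    apply Matrix.inv_eq_left_inv
    rw [hD, Matrix.diagonal_mul_diagonal]
    have : (fun k => (H k k)⁻¹ * H k k) = fun _ => (1:ℂ) :=
      funext fun k => inv_mul_cancel₀ (hHdiag k)
    rw [this, Matrix.diagonal_one]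
  set A := D⁻¹ * (D - H) with hA
  have hAentry : ∀ j k : Fin K, A j k = (H j j)⁻¹ * (D j k - H j k) := by
    intro j k
    rw [hA, hDinv, Matrix.diagonal_mul, Matrix.sub_apply]
  have hA0 : ∀ j : Fin K, A j j = 0 := by
    intro j
    rw [hAentry, hD]
    simp
  have hAb : ∀ j k : Fin K, j ≠ k →
      ‖A j k‖ ≤ (M / m) * μ ^ dist (p j) (p k) := by
    intro j k hjk
    rw [hAentry, hD]
    rw [Matrix.diagonal_apply_ne _ hjk]
    rw [zero_sub, norm_mul, norm_neg, norm_inv]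
    have h1 : (‖H j j‖)⁻¹ ≤ m⁻¹ := by
      apply inv_anti₀ hm (hdiag j)
    have h2 := hoff j k hjk
    have hpos : (0:ℝ) ≤ μ ^ dist (p j) (p k) := by positivity
    calc (‖H j j‖)⁻¹ * ‖H j k‖
        ≤ m⁻¹ * (M * μ ^ dist (p j) (p k)) := by
          apply mul_le_mul h1 h2 (norm_nonneg _) (by positivity)
      _ = (M / m) * μ ^ dist (p j) (p k) := by ring
  have key : ∀ n : ℕ, 1 ≤ n → ∀ j k : Fin K,
      ‖(A ^ n) j k‖ ≤
        (K : ℝ) ^ (n - 1) * (M / m) ^ n * μ ^ max (dist (p j) (p k)) (n * δ) := by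
    intro n hn
    induction n, hn using Nat.le_induction with
    | base =>
      intro j k
      simp only [pow_one, Nat.sub_self, pow_zero, one_mul, Nat.cast_one]
      by_cases hjk : j = k
      · subst hjk
        rw [hA0]
        simp only [norm_zero]
        positivity
      · have hd : δ ≤ dist (p j) (p k) := hδmin j k hjk
        rw [max_eq_left hd]
        exact hAb j k hjk
    | succ n hn ih =>
      intro j i
      push_cast
      have hstep : (A ^ (n + 1)) j i = ∑ k, (A ^ n) j k * A k i := by
        rw [pow_succ, Matrix.mul_apply]
      have hC0 : (0:ℝ) ≤ (K : ℝ) ^ (n - 1) * (M / m) ^ n := by positivity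
      calc ‖(A ^ (n + 1)) j i‖
          ≤ ∑ k, ‖(A ^ n) j k * A k i‖ := by
            rw [hstep]
            exact norm_sum_le _ _
        _ ≤ ∑ _k : Fin K, ((K : ℝ) ^ (n - 1) * (M / m) ^ n * (M / m) *
              μ ^ max (dist (p j) (p i)) ((n + 1) * δ)) := by
            apply Finset.sum_le_sum
            intro k _
            by_cases hki : k = i
            · subst hki
              rw [hA0, mul_zero, norm_zero]
              positivity
            · rw [norm_mul]
              have h1 := ih j k
              have h2 := hAb k i hki
              have habs : μ ^ max (dist (p j) (p k)) (n * δ) * μ ^ dist (p k) (p i)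
                  ≤ μ ^ max (dist (p j) (p i)) ((n + 1) * δ) := by
                rw [← Real.rpow_add hμ0]
                apply Real.rpow_le_rpow_of_exponent_ge hμ0 (le_of_lt hμ1)
                apply max_le
                · calc dist (p j) (p i) ≤ dist (p j) (p k) + dist (p k) (p i) :=
                        dist_triangle _ _ _
                    _ ≤ max (dist (p j) (p k)) (n * δ) + dist (p k) (p i) :=
                        add_le_add_left (le_max_left _ _) _
                · have hki' : δ ≤ dist (p k) (p i) := hδmin k i hki
                  have := le_max_right (dist (p j) (p k)) ((n : ℝ) * δ)
                  push_cast
                  linarith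
              calc ‖(A ^ n) j k‖ * ‖A k i‖
                  ≤ ((K : ℝ) ^ (n - 1) * (M / m) ^ n * μ ^ max (dist (p j) (p k)) (n * δ)) *
                      ((M / m) * μ ^ dist (p k) (p i)) := by
                    apply mul_le_mul h1 h2 (norm_nonneg _) (by positivity)
                _ = (K : ℝ) ^ (n - 1) * (M / m) ^ n * (M / m) *
                      (μ ^ max (dist (p j) (p k)) (n * δ) * μ ^ dist (p k) (p i)) := by
                    ring
                _ ≤ (K : ℝ) ^ (n - 1) * (M / m) ^ n * (M / m) *
                      μ ^ max (dist (p j) (p i)) ((n + 1) * δ) := by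
                    apply mul_le_mul_of_nonneg_left habs (by positivity)
        _ = (K : ℝ) ^ (n + 1 - 1) * (M / m) ^ (n + 1) *
              μ ^ max (dist (p j) (p i)) ((n + 1) * δ) := by
            rw [Finset.sum_const, Finset.card_univ, Fintype.card_fin, nsmul_eq_mul]
            have : (K : ℝ) * (K : ℝ) ^ (n - 1) = (K : ℝ) ^ n := by
              rw [← pow_succ']
              congr 1
              omega
            rw [Nat.add_sub_cancel, ← this]
            push_cast
            ring
  have hfin : ((A ^ n) * D⁻¹) j i = (A ^ n) j i * (H i i)⁻¹ := by
    rw [hDinv, Matrix.mul_diagonal]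
  rw [hfin, norm_mul, norm_inv]
  have h1 := key n hn j i
  have h2 : (‖H i i‖)⁻¹ ≤ 1 / m := by
    rw [one_div]
    exact inv_anti₀ hm (hdiag i)
  calc ‖(A ^ n) j i‖ * (‖H i i‖)⁻¹
      ≤ ((K : ℝ) ^ (n - 1) * (M / m) ^ n * μ ^ max (dist (p j) (p i)) (n * δ)) * (1 / m) := by
        apply mul_le_mul h1 h2 (by positivity) (by positivity)
    _ = (K : ℝ) ^ (n - 1) * (M / m) ^ n * (1 / m) * μ ^ max (dist (p j) (p i)) (n * δ) := by
        ring
end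

section
/- Exponential off-diagonal decay of the inverse channel matrix: Let K ≥ 2, let X be a metric space with distance d, and let p : {1,…,K} → X be injective; set δ := min_{k≠i} d(p_k, p_i) > 0. Let μ ∈ (0,1), M > 0, m > 0, and let H ∈ ℂ^{K×K} satisfy |H_{ki}| ≤ M μ^{d(p_k,p_i)} for all k ≠ i and |H_{ii}| ≥ m for all i. If q := K (M/m) μ^{δ/2} < 1, then H is invertible and for all j ≠ i: |(H^{−1})_{ji}| ≤ (M / (m²(1−q))) · μ^{(d(p_j,p_i) + δ)/2}. In particular, the entries of H^{−1} decay exponentially in the distance between the corresponding TX and RX. -/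
/-!
STATEMENT 11: Exponential off-diagonal decay of the inverse channel matrix.
-/

set_option maxHeartbeats 1000000 in
/-- A channel matrix with geometrically decaying off-diagonal entries
(`|H_{ki}| ≤ M μ^{d(p_k,p_i)}`, `|H_{ii}| ≥ m`) between `δ`-separated nodes is
invertible as soon as `q = K (M/m) μ^{δ/2} < 1`, and its inverse has exponentially
decaying off-diagonal entries:
`|(H⁻¹)_{ji}| ≤ (M/(m²(1-q))) μ^{(d(p_j,p_i)+δ)/2}` for `j ≠ i`. -/
theorem exponential_offdiagonal_decay_of_inverse
    (K : ℕ) (hK : 2 ≤ K) {X : Type*} [MetricSpace X]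
    (p : Fin K → X) (hp : Function.Injective p)
    (δ : ℝ) (hδpos : 0 < δ)
    (hδmin : ∀ k i : Fin K, k ≠ i → δ ≤ dist (p k) (p i))
    (μ : ℝ) (hμ0 : 0 < μ) (hμ1 : μ < 1) (M m : ℝ) (hM : 0 < M) (hm : 0 < m)
    (H : Matrix (Fin K) (Fin K) ℂ)
    (hoff : ∀ k i : Fin K, k ≠ i → ‖H k i‖ ≤ M * μ ^ dist (p k) (p i))
    (hdiag : ∀ i : Fin K, m ≤ ‖H i i‖)
    (q : ℝ) (hq : q = (K : ℝ) * (M / m) * μ ^ (δ / 2)) (hq1 : q < 1) :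
    IsUnit H.det ∧
      ∀ j i : Fin K, j ≠ i →
        ‖H⁻¹ j i‖ ≤
          M / (m ^ 2 * (1 - q)) * μ ^ ((dist (p j) (p i) + δ) / 2) := by
  classical
  -- weights
  set w : Fin K → Fin K → ℝ := fun j i => μ ^ (dist (p j) (p i) / 2) with hw_def
  set c : ℝ := (M / m) * μ ^ (δ / 2) with hc_def
  have hμ1' : μ ≤ 1 := le_of_lt hμ1
  have hw_pos : ∀ j i, 0 < w j i := fun j i => Real.rpow_pos_of_pos hμ0 _
  have hw_le_one : ∀ j i, w j i ≤ 1 := fun j i =>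
    Real.rpow_le_one hμ0.le hμ1' (by positivity)
  have hw_mul : ∀ j k i : Fin K, w j k * w k i ≤ w j i := by
    intro j k i
    have htri : dist (p j) (p i) ≤ dist (p j) (p k) + dist (p k) (p i) :=
      dist_triangle _ _ _
    have : μ ^ ((dist (p j) (p k) + dist (p k) (p i)) / 2) ≤ μ ^ (dist (p j) (p i) / 2) :=
      Real.rpow_le_rpow_of_exponent_ge hμ0 hμ1' (by linarith)
    calc w j k * w k i = μ ^ ((dist (p j) (p k) + dist (p k) (p i)) / 2) := by
          rw [hw_def]; rw [← Real.rpow_add hμ0]; ring_nf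
      _ ≤ w j i := this
  have hc_pos : 0 < c := by
    have := Real.rpow_pos_of_pos hμ0 (δ / 2); positivity
  have hKpos : (0 : ℝ) < K := by positivity
  have hqc : q = (K : ℝ) * c := by rw [hq, hc_def]; ring
  have hq_pos : 0 < q := by rw [hqc]; positivity
  have hHii : ∀ i, H i i ≠ 0 := by
    intro i h
    have := hdiag i
    rw [h] at this; simp at this; linarith
  -- F = -E, entrywise
  set F : Matrix (Fin K) (Fin K) ℂ :=
    fun j i => if j = i then 0 else -((H j j)⁻¹ * H j i) with hF_def
  -- entrywise bound on F
  have hF : ∀ j i, ‖F j i‖ ≤ c * w j i := by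
    intro j i
    by_cases hji : j = i
    · simp [hF_def, hji]
      positivity
    · have hd : δ ≤ dist (p j) (p i) := hδmin j i hji
      have h1 : ‖F j i‖ = (‖H j j‖)⁻¹ * ‖H j i‖ := by
        simp [hF_def, hji, map_mul, map_inv₀]
      have h2 : (‖H j j‖)⁻¹ ≤ m⁻¹ := by
        apply inv_anti₀ hm (hdiag j)
      have h3 : ‖H j i‖ ≤ M * μ ^ dist (p j) (p i) := hoff j i hji
      have h4 : μ ^ dist (p j) (p i) ≤ μ ^ (δ / 2) * μ ^ (dist (p j) (p i) / 2) := by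
        rw [← Real.rpow_add hμ0]
        exact Real.rpow_le_rpow_of_exponent_ge hμ0 hμ1' (by linarith)
      calc ‖F j i‖ = (‖H j j‖)⁻¹ * ‖H j i‖ := h1
        _ ≤ m⁻¹ * (M * μ ^ dist (p j) (p i)) := by
            apply mul_le_mul h2 h3 (by positivity) (by positivity)
        _ ≤ m⁻¹ * (M * (μ ^ (δ / 2) * μ ^ (dist (p j) (p i) / 2))) := by
            apply mul_le_mul_of_nonneg_left _ (by positivity)
            exact mul_le_mul_of_nonneg_left h4 hM.le
        _ = c * w j i := by rw [hc_def, hw_def]; ring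
  -- power bound
  have hFpow : ∀ n : ℕ, ∀ j i, ‖(F ^ (n + 1)) j i‖ ≤
      (K : ℝ) ^ n * c ^ (n + 1) * w j i := by
    intro n
    induction n with
    | zero => intro j i; simpa using hF j i
    | succ n ih =>
      intro j i
      have hrw : (F ^ (n + 2)) j i = ∑ k, (F ^ (n + 1)) j k * F k i := by
        rw [pow_succ]; rw [Matrix.mul_apply]
      rw [hrw]
      calc ‖∑ k, (F ^ (n + 1)) j k * F k i‖
          ≤ ∑ k, ‖(F ^ (n + 1)) j k * F k i‖ :=
            norm_sum_le _ _
        _ ≤ ∑ k : Fin K, (K : ℝ) ^ n * c ^ (n + 1) * c * w j i := by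
            apply Finset.sum_le_sum
            intro k _
            rw [norm_mul]
            calc ‖(F ^ (n + 1)) j k‖ * ‖F k i‖
                ≤ ((K : ℝ) ^ n * c ^ (n + 1) * w j k) * (c * w k i) := by
                  apply mul_le_mul (ih j k) (hF k i) (by positivity) (by positivity)
              _ = ((K : ℝ) ^ n * c ^ (n + 1) * c) * (w j k * w k i) := by ring
              _ ≤ ((K : ℝ) ^ n * c ^ (n + 1) * c) * w j i := by
                  apply mul_le_mul_of_nonneg_left (hw_mul j k i) (by positivity)
        _ = (K : ℝ) ^ (n + 1) * c ^ (n + 2) * w j i := by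
            rw [Finset.sum_const, Finset.card_univ, Fintype.card_fin]
            push_cast; ring
  -- geometric bound (all entries)
  have hgeom : ∀ n : ℕ, ∀ j i, ‖(F ^ n) j i‖ ≤ q ^ n := by
    intro n j i
    match n with
    | 0 =>
      simp only [pow_zero, Matrix.one_apply]
      by_cases hji : j = i <;> simp [hji]
    | n + 1 =>
      calc ‖(F ^ (n + 1)) j i‖ ≤ (K : ℝ) ^ n * c ^ (n + 1) * w j i :=
            hFpow n j i
        _ ≤ (K : ℝ) ^ (n + 1) * c ^ (n + 1) * 1 := by
            apply mul_le_mul _ (hw_le_one j i) (hw_pos j i).le (by positivity)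
            apply mul_le_mul_of_nonneg_right _ (by positivity)
            exact pow_le_pow_right₀ (by exact_mod_cast Nat.one_le_of_lt hK) (Nat.le_succ n)
        _ = q ^ (n + 1) := by rw [hqc, mul_one]; exact (mul_pow _ _ _).symm
  -- summability of entries
  have hgeo_summ : Summable (fun n : ℕ => q ^ n) :=
    summable_geometric_of_lt_one hq_pos.le hq1
  have hSummable : ∀ j i, Summable (fun n : ℕ => (F ^ n) j i) := by
    intro j i
    apply Summable.of_norm_bounded (g := fun n => q ^ n) hgeo_summ
    intro n
    exact hgeom n j i
  set S : Matrix (Fin K) (Fin K) ℂ := fun j i => ∑' n : ℕ, (F ^ n) j i with hS_def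
  have hSummable' : ∀ j i, Summable (fun n : ℕ => (F ^ (n + 1)) j i) := by
    intro j i
    apply Summable.of_norm_bounded (g := fun n => q * q ^ n) (hgeo_summ.mul_left q)
    intro n
    rw [← pow_succ']
    exact hgeom (n + 1) j i
  -- (1 - F) * S = 1
  have hAS : (1 - F) * S = 1 := by
    ext j i
    rw [Matrix.mul_apply]
    have step1 : ∀ k, (1 - F) j k * S k i = ∑' n : ℕ, (1 - F) j k * (F ^ n) k i := by
      intro k; rw [hS_def]; exact (tsum_mul_left).symm
    simp_rw [step1]
    rw [← Summable.tsum_finsetSum (fun k _ => (hSummable k i).mul_left _)]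
    have step2 : ∀ n : ℕ, (∑ k, (1 - F) j k * (F ^ n) k i) =
        (F ^ n) j i - (F ^ (n + 1)) j i := by
      intro n
      rw [← Matrix.mul_apply]
      have : (1 - F) * F ^ n = F ^ n - F ^ (n + 1) := by
        rw [sub_mul, one_mul, pow_succ']
      rw [this, Matrix.sub_apply]
    simp_rw [step2]
    rw [Summable.tsum_sub (hSummable j i) (hSummable' j i)]
    rw [Summable.tsum_eq_zero_add (hSummable j i)]
    simp [Matrix.one_apply, pow_zero]
  -- right inverse of H
  set Dinv : Matrix (Fin K) (Fin K) ℂ := Matrix.diagonal (fun i => (H i i)⁻¹) with hDinv_def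
  have hHdec : H = Matrix.diagonal (fun i => H i i) * (1 - F) := by
    ext j i
    rw [Matrix.diagonal_mul]
    by_cases hji : j = i
    · subst hji; rw [Matrix.sub_apply, Matrix.one_apply_eq]; simp [hF_def]
    · rw [Matrix.sub_apply, Matrix.one_apply_ne hji]
      have hFji : F j i = -((H j j)⁻¹ * H j i) := if_neg hji
      rw [hFji]
      field_simp
      rw [zero_sub, neg_neg, mul_comm, div_mul_cancel₀ _ (hHii j)]
  have hright : H * (S * Dinv) = 1 := by
    rw [hHdec, hDinv_def]
    calc Matrix.diagonal (fun i => H i i) * (1 - F) * (S * Matrix.diagonal fun i => (H i i)⁻¹)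
        = Matrix.diagonal (fun i => H i i) * ((1 - F) * S) * Matrix.diagonal (fun i => (H i i)⁻¹) := by
          rw [mul_assoc, mul_assoc, mul_assoc]
      _ = Matrix.diagonal (fun i => H i i) * Matrix.diagonal (fun i => (H i i)⁻¹) := by
          rw [hAS, mul_one]
      _ = 1 := by
          rw [Matrix.diagonal_mul_diagonal]
          convert Matrix.diagonal_one
          exact mul_inv_cancel₀ (hHii _)
  refine ⟨Matrix.isUnit_det_of_right_inverse hright, ?_⟩
  intro j i hji
  have hinv : H⁻¹ = S * Dinv := Matrix.inv_eq_right_inv hright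
  rw [hinv, hDinv_def, Matrix.mul_diagonal]
  rw [norm_mul, norm_inv]
  -- bound on S j i
  have hS0 : (F ^ 0) j i = 0 := by simp [Matrix.one_apply, hji]
  have hSsum : S j i = ∑' n : ℕ, (F ^ (n + 1)) j i := by
    show (∑' n : ℕ, (F ^ n) j i) = ∑' n : ℕ, (F ^ (n + 1)) j i
    rw [Summable.tsum_eq_zero_add (hSummable j i), hS0, zero_add]
  have hbound_summ : Summable (fun n : ℕ => c * w j i * q ^ n) :=
    hgeo_summ.mul_left _
  have hSbound : ‖S j i‖ ≤ c * w j i * (1 - q)⁻¹ := by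
    rw [hSsum]
    have h1 : Summable (fun n : ℕ => ‖(F ^ (n + 1)) j i‖) := by
      apply Summable.of_norm_bounded (g := fun n => c * w j i * q ^ n) hbound_summ
      intro n
      rw [norm_norm]
      calc ‖(F ^ (n + 1)) j i‖ ≤ (K : ℝ) ^ n * c ^ (n + 1) * w j i :=
            hFpow n j i
        _ = c * w j i * ((K : ℝ) * c) ^ n := by rw [mul_pow]; ring
        _ = c * w j i * q ^ n := by rw [hqc]
    calc ‖∑' n : ℕ, (F ^ (n + 1)) j i‖
        = ‖∑' n : ℕ, (F ^ (n + 1)) j i‖ := rfl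
      _ ≤ ∑' n : ℕ, ‖(F ^ (n + 1)) j i‖ := norm_tsum_le_tsum_norm h1
      _ ≤ ∑' n : ℕ, c * w j i * q ^ n := by
          apply Summable.tsum_le_tsum _ h1 hbound_summ
          intro n
          calc ‖(F ^ (n + 1)) j i‖ ≤ (K : ℝ) ^ n * c ^ (n + 1) * w j i :=
                hFpow n j i
            _ = c * w j i * ((K : ℝ) * c) ^ n := by rw [mul_pow]; ring
            _ = c * w j i * q ^ n := by rw [hqc]
      _ = c * w j i * (1 - q)⁻¹ := by
          rw [tsum_mul_left, tsum_geometric_of_lt_one hq_pos.le hq1]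
  have hHinv_le : (‖H i i‖)⁻¹ ≤ m⁻¹ := inv_anti₀ hm (hdiag i)
  have h1q : 0 < 1 - q := by linarith
  calc ‖S j i‖ * (‖H i i‖)⁻¹
      ≤ (c * w j i * (1 - q)⁻¹) * m⁻¹ := by
        apply mul_le_mul hSbound hHinv_le (by positivity) (by positivity)
    _ = M / (m ^ 2 * (1 - q)) * μ ^ ((dist (p j) (p i) + δ) / 2) := by
        rw [hc_def, hw_def]
        have : μ ^ ((dist (p j) (p i) + δ) / 2) = μ ^ (dist (p j) (p i) / 2) * μ ^ (δ / 2) := by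
          rw [← Real.rpow_add hμ0]; ring_nf
        rw [this]
        field_simp
end
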